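/- An integral domain A is a unique factorization domain if and only if every nonzero prime ideal of A contains a nonzero principal prime ideal. -/

import Mathlib

/-- The set of elements that are a unit times a product of primes, as a saturated set. -/
private def kapS (A : Type*) [CommMonoidWithZero A] : Set A :=
  {a | ∃ f : Multiset A, (∀ p ∈ f, Prime p) ∧ ∃ u : A, IsUnit u ∧ f.prod * u = a}

private lemma kapS_one (A : Type*) [CommMonoidWithZero A] : (1 : A) ∈ kapS A :=
  ⟨0, by simp, 1, isUnit_one, by simp⟩

private lemma kapS_mul {A : Type*} [CommMonoidWithZero A] {a b : A} (ha : a ∈ kapS A)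
    (hb : b ∈ kapS A) : a * b ∈ kapS A := by
  obtain ⟨f, hf, u, hu, hfu⟩ := ha
  obtain ⟨g, hg, v, hv, hgv⟩ := hb
  exact ⟨f + g, fun p hp => ((Multiset.mem_add).1 hp).elim (hf p) (hg p), u * v,
    hu.mul hv, by rw [Multiset.prod_add, ← hfu, ← hgv, mul_mul_mul_comm]⟩

/-- Saturation of `kapS`. -/
private lemma kapS_saturated {A : Type*} [CommMonoidWithZero A] [IsCancelMulZero A] {x y : A}
    (h : x * y ∈ kapS A) : x ∈ kapS A := by
  obtain ⟨f, hf, u, hu, hfu⟩ := h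
  induction f using Multiset.induction generalizing x y with
  | empty =>
    simp only [Multiset.prod_zero, one_mul] at hfu
    exact ⟨0, by simp, x, isUnit_of_mul_isUnit_left (hfu ▸ hu), by simp⟩
  | cons p s ih =>
    have hp : Prime p := hf p (Multiset.mem_cons_self p s)
    have hs : ∀ q ∈ s, Prime q := fun q hq => hf q (Multiset.mem_cons_of_mem hq)
    rw [Multiset.prod_cons, mul_assoc] at hfu
    have hpd : p ∣ x * y := ⟨s.prod * u, hfu.symm⟩
    have hp0 : p ≠ 0 := hp.ne_zero
    rcases hp.dvd_or_dvd hpd with ⟨x', rfl⟩ | ⟨y', rfl⟩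
    · have h1 : s.prod * u = x' * y := by
        apply mul_left_cancel₀ hp0
        rw [hfu, mul_assoc]
      obtain ⟨g, hg, v, hv, hgv⟩ := ih hs h1
      exact ⟨p ::ₘ g, fun q hq => ((Multiset.mem_cons).1 hq).elim (fun h => h ▸ hp) (hg q),
        v, hv, by rw [Multiset.prod_cons, mul_assoc, hgv]⟩
    · have h1 : s.prod * u = x * y' := by
        apply mul_left_cancel₀ hp0
        rw [hfu, mul_left_comm]
      exact ih hs h1

/-- Kaplansky's criterion: an integral domain `A` is a unique factorization domain if
and only if every nonzero prime ideal of `A` contains a nonzero principal prime ideal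
(equivalently, contains a prime element). -/
theorem kaplansky_criterion (A : Type*) [CommRing A] [IsDomain A] :
    UniqueFactorizationMonoid A ↔
      ∀ P : Ideal A, P ≠ ⊥ → P.IsPrime →
        ∃ p : A, p ∈ P ∧ p ≠ 0 ∧ (Ideal.span {p}).IsPrime := by
  constructor
  · intro _ P hP hPp
    obtain ⟨p, hpP, hp⟩ := hPp.exists_mem_prime_of_ne_bot hP
    exact ⟨p, hpP, hp.ne_zero, (Ideal.span_singleton_prime hp.ne_zero).2 hp⟩
  · intro H
    -- the saturated multiplicative set
    set S : Submonoid A := ⟨⟨kapS A, fun ha hb => kapS_mul ha hb⟩, kapS_one A⟩ with hS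
    have h0S : (0 : A) ∉ kapS A := by
      rintro ⟨f, hf, u, hu, hfu⟩
      exact (mul_ne_zero (Multiset.prod_ne_zero fun h0 => (hf 0 h0).ne_zero rfl)
        hu.ne_zero) hfu
    have key : ∀ a : A, a ≠ 0 → a ∈ kapS A := by
      intro a ha
      by_contra haS
      have hdisj : Disjoint (↑(Ideal.span {a} : Ideal A) : Set A) (S : Set A) := by
        rw [Set.disjoint_left]
        rintro b hb hbS
        obtain ⟨c, rfl⟩ := Ideal.mem_span_singleton'.1 hb
        exact haS (kapS_saturated (mul_comm c a ▸ hbS))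
      obtain ⟨P, hPp, hle, hPd⟩ := Ideal.exists_le_prime_disjoint _ S hdisj
      have hPne : P ≠ ⊥ := by
        intro h
        have : a ∈ P := hle (Ideal.mem_span_singleton_self a)
        rw [h, Ideal.mem_bot] at this
        exact ha this
      obtain ⟨p, hpP, hp0, hpPr⟩ := H P hPne hPp
      have hp : Prime p := (Ideal.span_singleton_prime hp0).1 hpPr
      have hpS : p ∈ kapS A := ⟨{p}, by simpa using hp, 1, isUnit_one, by simp⟩
      exact Set.disjoint_left.1 hPd hpP hpS
    refine UniqueFactorizationMonoid.of_exists_prime_factors fun a ha => ?_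
    obtain ⟨f, hf, u, hu, hfu⟩ := key a ha
    exact ⟨f, hf, hfu ▸ (associated_mul_unit_right _ u hu)⟩
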